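/- The kernel of π (the toric ideal of the Segre-Veronese configuration) is generated, as an ideal of K[y_α : α ∈ V], by the set G of quadratic binomials y_α y_β − y_{γ_odd} y_{γ_even} taken over all nonsorted pairs {α, β} of admissible tuples. -/

import Mathlib

open MvPolynomial Finset

variable (τ d M : ℕ) (b c s r : Fin M → ℕ)

/-- A tuple α = (α_1,…,α_τ) with entries in {1,…,d} is admissible if it is
weakly increasing and for every i ∈ {1,…,M}, c_i ≤ #{k : s_i ≤ α_k ≤ r_i} ≤ b_i. -/
structure Admissible (α : Fin τ → ℕ) : Prop where
  mono : Monotone α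
  mem : ∀ k, 1 ≤ α k ∧ α k ≤ d
  count : ∀ i : Fin M,
    c i ≤ (Finset.univ.filter fun k : Fin τ => s i ≤ α k ∧ α k ≤ r i).card ∧
    (Finset.univ.filter fun k : Fin τ => s i ≤ α k ∧ α k ≤ r i).card ≤ b i

/-- `IsSplit α β γodd γeven` : γodd and γeven are the odd- and even-position
subsequences of the weakly increasing rearrangement γ of the 2τ entries of α and β. -/
def IsSplit {τ : ℕ} (α β γodd γeven : Fin τ → ℕ) : Prop :=
  ∃ γ : Fin (2 * τ) → ℕ, Monotone γ ∧
    ((List.ofFn γ : List ℕ) : Multiset ℕ)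
      = ((List.ofFn α ++ List.ofFn β : List ℕ) : Multiset ℕ) ∧
    ∀ t : Fin τ, γodd t = γ ⟨2 * t.1, by have := t.isLt; omega⟩ ∧
      γeven t = γ ⟨2 * t.1 + 1, by have := t.isLt; omega⟩

/-- The pair (α, β), in this order, is sorted: α_1 ≤ β_1 ≤ α_2 ≤ β_2 ≤ ⋯ ≤ α_τ ≤ β_τ. -/
def PairOrdered {τ : ℕ} (α β : Fin τ → ℕ) : Prop :=
  (∀ t, α t ≤ β t) ∧ ∀ t t' : Fin τ, t.1 + 1 = t'.1 → β t ≤ α t'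

/-- The pair {α, β} is nonsorted: neither (α, β) nor (β, α) is sorted. -/
def Nonsorted {τ : ℕ} (α β : Fin τ → ℕ) : Prop :=
  ¬ (PairOrdered α β ∨ PairOrdered β α)

/-- The toric (Segre–Veronese) homomorphism π with π(y_α) = q_{α_1} ⋯ q_{α_τ},
where q_1, …, q_d are the variables of `MvPolynomial (Fin d) K` (the 1-based
entry j of α corresponds to the variable indexed by j − 1 : Fin d). -/
noncomputable def piSV (K : Type*) [Field K] :
    MvPolynomial {x : Fin τ → ℕ // Admissible τ d M b c s r x} K →ₐ[K]
      MvPolynomial (Fin d) K :=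
  aeval fun v => ∏ k : Fin τ, X (⟨v.1 k - 1, by have := v.2.mem k; omega⟩ : Fin d)

/-- The quadratic move e_{γodd} + e_{γeven} − e_α − e_β. -/
def QuadMove {V : Type*} [DecidableEq V] (α β γodd γeven : V) : V → ℤ := fun v =>
  (if v = γodd then 1 else 0) + (if v = γeven then 1 else 0)
    - (if v = α then 1 else 0) - (if v = β then 1 else 0)

namespace SVAux


lemma sum_range_two_mul {Mo : Type*} [AddCommMonoid Mo] (n : ℕ) (f : ℕ → Mo) :
    ∑ i ∈ Finset.range (2*n), f i = ∑ t ∈ Finset.range n, (f (2*t) + f (2*t+1)) := by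
  induction n with
  | zero => simp
  | succ n ih =>
    have h2 : 2*(n+1) = (2*n)+1+1 := by omega
    rw [h2, Finset.sum_range_succ, Finset.sum_range_succ, ih, Finset.sum_range_succ]
    have e1 : 2*n+1 = 2*n+1 := rfl
    abel

lemma lowerset_iff (n : ℕ) (P : ℕ → Prop) [DecidablePred P]
    (h : ∀ i j : ℕ, i ≤ j → j < n → P j → P i) :
    ∀ j, j < n → (P j ↔ j < ((Finset.range n).filter P).card) := by
  intro j hj
  by_cases hne : ((Finset.range n).filter P) = ∅
  · constructor
    · intro hPj
      exact absurd (Finset.mem_filter.2 ⟨Finset.mem_range.2 hj, hPj⟩) (by simp [hne])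
    · intro hlt; simp [hne] at hlt
  · set F := (Finset.range n).filter P with hF
    have hFne : F.Nonempty := Finset.nonempty_iff_ne_empty.2 hne
    set m := F.max' hFne with hm
    have hmF : m ∈ F := F.max'_mem hFne
    have hmn : m < n := Finset.mem_range.1 (Finset.mem_filter.1 hmF).1
    have hPm : P m := (Finset.mem_filter.1 hmF).2
    have hFeq : F = Finset.range (m+1) := by
      ext j'
      simp only [Finset.mem_range, Nat.lt_succ_iff]
      constructor
      · intro hj'; exact F.le_max' j' hj'
      · intro hj'
        exact Finset.mem_filter.2 ⟨Finset.mem_range.2 (lt_of_le_of_lt hj' hmn), h j' m hj' hmn hPm⟩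
    rw [hFeq, Finset.card_range, Nat.lt_succ_iff]
    constructor
    · intro hPj
      exact F.le_max' j (Finset.mem_filter.2 ⟨Finset.mem_range.2 hj, hPj⟩)
    · intro hjm; exact h j m hjm hmn hPm



lemma exists_max (S : Multiset ℕ) (h : S ≠ 0) : ∃ x ∈ S, ∀ y ∈ S, y ≤ x := by
  induction S using Multiset.induction with
  | empty => exact absurd rfl h
  | cons a t ih =>
    by_cases ht : t = 0
    · subst ht; exact ⟨a, Multiset.mem_cons_self a 0, by intro y hy; simp at hy; omega⟩
    · obtain ⟨x, hxt, hx⟩ := ih ht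
      refine ⟨max a x, ?_, ?_⟩
      · rcases le_total a x with h' | h'
        · simp [max_eq_right h']; exact Or.inr hxt
        · simp [max_eq_left h']
      · intro y hy
        rcases Multiset.mem_cons.1 hy with rfl | hy'
        · exact le_max_left _ _
        · exact le_trans (hx y hy') (le_max_right _ _)

lemma range_succ_val (k : ℕ) : (Finset.range (k+1)).val = k ::ₘ (Finset.range k).val := by
  rw [Finset.range_add_one, Finset.insert_val, Multiset.ndinsert_of_notMem (by simp)]

/-- Sum of any `k`-element sub-multiset of a sorted enumeration is at least the sum of the
first `k` values; equality forces it to be exactly the multiset of first `k` values. -/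
lemma kSmallest (n : ℕ) (γ' : ℕ → ℕ) (hmono : ∀ i j : ℕ, i ≤ j → j < n → γ' i ≤ γ' j) :
    ∀ (k : ℕ) (S : Multiset ℕ), k ≤ n → S ≤ (Finset.range n).val.map γ' → Multiset.card S = k →
    ((∑ i ∈ Finset.range k, γ' i) ≤ S.sum ∧
      (S.sum = ∑ i ∈ Finset.range k, γ' i → S = (Finset.range k).val.map γ')) := by
  intro k
  induction k with
  | zero =>
    intro S _ _ hcard
    have : S = 0 := Multiset.card_eq_zero.1 hcard
    subst this; simp
  | succ k ih =>
    intro S hkn hSE hcard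
    have hSne : S ≠ 0 := by
      intro h0; rw [h0] at hcard; simp at hcard
    obtain ⟨x, hxS, hxmax⟩ := exists_max S hSne
    set S' := S.erase x with hS'
    have hScons : S = x ::ₘ S' := (Multiset.cons_erase hxS).symm
    have hS'E : S' ≤ (Finset.range n).val.map γ' := le_trans (Multiset.erase_le x S) hSE
    have hS'card : Multiset.card S' = k := by
      have := Multiset.card_cons x S'
      rw [← hScons, hcard] at this; omega
    -- γ' k ≤ x
    have hγk : γ' k ≤ x := by
      by_contra hlt
      push_neg at hlt
      have hcount : Multiset.countP (· ≤ x) S = k + 1 := by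
        rw [Multiset.countP_eq_card_filter]
        rw [Multiset.filter_eq_self.2 (fun y hy => by simpa using hxmax y hy)]
        exact hcard
      have hle : Multiset.countP (· ≤ x) S ≤ Multiset.countP (· ≤ x) ((Finset.range n).val.map γ') :=
        Multiset.countP_le_of_le _ hSE
      have hsubset : ((Finset.range n).val.filter (fun i => γ' i ≤ x)) ≤ ((Finset.range k).val) := by
        apply Multiset.le_iff_subset ((Finset.range n).nodup.filter _) |>.2
        intro j hj
        have hj1 := Multiset.mem_filter.1 hj
        have hjn : j < n := by simpa using hj1.1
        have : j < k := by
          by_contra hge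
          push_neg at hge
          exact absurd (le_trans (hmono k j hge hjn) hj1.2) (by omega)
        simpa using this
      have hcard2 : Multiset.countP (· ≤ x) ((Finset.range n).val.map γ') ≤ k := by
        rw [Multiset.countP_map]
        have h3 := Multiset.card_le_card hsubset
        simpa using h3
      omega
    have ihS' := ih S' (by omega) hS'E hS'card
    have hsum : S.sum = x + S'.sum := by rw [hScons]; simp
    constructor
    · rw [Finset.sum_range_succ, hsum]
      omega
    · intro heq
      have h1 : S'.sum = ∑ i ∈ Finset.range k, γ' i ∧ x = γ' k := by
        rw [Finset.sum_range_succ] at heq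
        constructor <;> omega
      have hS'eq := ihS'.2 h1.1
      rw [hScons, hS'eq, h1.2, range_succ_val, Multiset.map_cons]




def pad {n : ℕ} (f : Fin n → ℕ) : ℕ → ℕ := fun i => if h : i < n then f ⟨i, h⟩ else 0

lemma pad_lt {n : ℕ} (f : Fin n → ℕ) (i : ℕ) (h : i < n) : pad f i = f ⟨i, h⟩ := dif_pos h

def cntM {n : ℕ} (v : Fin n → ℕ) : Multiset ℕ := ((List.ofFn v : List ℕ) : Multiset ℕ)

lemma cntM_card {n : ℕ} (v : Fin n → ℕ) : Multiset.card (cntM v) = n := by simp [cntM]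

-- generic: mapping getD over range of length recovers the list
lemma map_getD_range (L : List ℕ) :
    (Finset.range L.length).val.map (fun i => L.getD i 0) = (L : Multiset ℕ) := by
  have : (Finset.range L.length).val.map (fun i => L.getD i 0)
      = ((List.range L.length).map (fun i => L.getD i 0) : List ℕ) := rfl
  rw [this]
  congr 1
  apply List.ext_getElem
  · simp
  · intro i h1 h2
    simp only [List.getElem_map, List.getElem_range]
    rw [List.getD_eq_getElem]

section Merge
variable {τ : ℕ} (α β : Fin τ → ℕ)

def mrg : List ℕ := (cntM α + cntM β).sort (· ≤ ·)

lemma mrg_length : (mrg α β).length = 2 * τ := by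
  simp [mrg, Multiset.length_sort, cntM_card]; omega

def mrgF : ℕ → ℕ := fun i => (mrg α β).getD i 0

lemma mrgF_mono : ∀ i j : ℕ, i ≤ j → j < 2 * τ → mrgF α β i ≤ mrgF α β j := by
  intro i j hij hj
  have hlen := mrg_length α β
  have hjl : j < (mrg α β).length := by omega
  have hil : i < (mrg α β).length := by omega
  rw [mrgF, mrgF, List.getD_eq_getElem _ _ hil, List.getD_eq_getElem _ _ hjl]
  have hs : (mrg α β).Pairwise (· ≤ ·) := Multiset.pairwise_sort _ _
  exact hs.rel_get_of_le (a := ⟨i, hil⟩) (b := ⟨j, hjl⟩) hij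

lemma mrg_multiset :
    (Finset.range (2*τ)).val.map (mrgF α β) = cntM α + cntM β := by
  have h := map_getD_range (mrg α β)
  rw [mrg_length] at h
  rw [show mrgF α β = fun i => (mrg α β).getD i 0 from rfl, h]
  exact Multiset.sort_eq _ _


end Merge

lemma finset_sum_singleton_map {ι β : Type*} [DecidableEq ι] (s : Finset ι) (f : ι → β) :
    ∑ i ∈ s, ({f i} : Multiset β) = s.val.map f := by
  induction s using Finset.induction with
  | empty => simp
  | insert _ _ h ih =>
    rw [Finset.sum_insert h, ih, Finset.insert_val, Multiset.ndinsert_of_notMem h,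
      Multiset.map_cons]
    rfl

lemma ofFn_multiset {n : ℕ} (f : Fin n → ℕ) :
    cntM f = ∑ i ∈ Finset.range n, ({pad f i} : Multiset ℕ) := by
  rw [finset_sum_singleton_map]
  have h := map_getD_range (List.ofFn f)
  rw [List.length_ofFn] at h
  rw [show cntM f = ((List.ofFn f : List ℕ) : Multiset ℕ) from rfl, ← h]
  refine Multiset.map_congr rfl ?_
  intro i hi
  have hin : i < n := by simpa using hi
  rw [pad_lt f i hin, List.getD_eq_getElem _ _ (by simpa using hin), List.getElem_ofFn]

lemma cntM_eq_map_range {n : ℕ} (f : Fin n → ℕ) :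
    cntM f = (Finset.range n).val.map (pad f) := by
  rw [ofFn_multiset, finset_sum_singleton_map]

lemma countP_cntM {n : ℕ} (v : Fin n → ℕ) (p : ℕ → Prop) [DecidablePred p] :
    Multiset.countP p (cntM v) = (Finset.univ.filter (fun k : Fin n => p (v k))).card := by
  rw [cntM_eq_map_range, Multiset.countP_map]
  have h1 : Multiset.filter (fun a => p (pad v a)) (Finset.range n).val
      = ((Finset.range n).filter (fun a => p (pad v a))).val := rfl
  rw [h1]
  show ((Finset.range n).filter (fun a => p (pad v a))).card = _
  rw [Finset.card_filter, Finset.card_filter]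
  rw [← Fin.sum_univ_eq_sum_range (fun i => if p (pad v i) then 1 else 0) n]
  refine Finset.sum_congr rfl fun i _ => ?_
  rw [pad_lt v i.1 i.isLt]



section SplitDef
variable {τ : ℕ} (α β : Fin τ → ℕ)

def sOdd : Fin τ → ℕ := fun t => mrgF α β (2 * t.1)

def sEvn : Fin τ → ℕ := fun t => mrgF α β (2 * t.1 + 1)

lemma sOdd_mono : Monotone (sOdd α β) := fun t t' h =>
  mrgF_mono α β _ _ (by omega : 2 * t.1 ≤ 2 * t'.1) (by have := t'.isLt; omega)

lemma sEvn_mono : Monotone (sEvn α β) := fun t t' h =>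
  mrgF_mono α β _ _ (by omega : 2 * t.1 + 1 ≤ 2 * t'.1 + 1) (by have := t'.isLt; omega)

lemma pairOrdered_split : PairOrdered (sOdd α β) (sEvn α β) := by
  constructor
  · intro t
    exact mrgF_mono α β _ _ (by omega) (by have := t.isLt; omega)
  · intro t t' h
    exact mrgF_mono α β _ _ (by omega) (by have := t'.isLt; omega)

lemma isSplit_split : IsSplit α β (sOdd α β) (sEvn α β) := by
  refine ⟨fun i => mrgF α β i.1, ?_, ?_, ?_⟩
  · intro i j hij
    exact mrgF_mono α β _ _ hij j.isLt
  · have h1 : ((List.ofFn (fun i : Fin (2*τ) => mrgF α β i.1) : List ℕ) : Multiset ℕ)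
        = cntM (fun i : Fin (2*τ) => mrgF α β i.1) := rfl
    have h2 : ((List.ofFn α ++ List.ofFn β : List ℕ) : Multiset ℕ) = cntM α + cntM β := by
      rw [← Multiset.coe_add]; rfl
    rw [h1, h2, cntM_eq_map_range, ← mrg_multiset α β]
    refine Multiset.map_congr rfl ?_
    intro i hi
    have hin : i < 2*τ := by simpa using hi
    rw [pad_lt _ i hin]
  · intro t; exact ⟨rfl, rfl⟩

lemma split_content : cntM (sOdd α β) + cntM (sEvn α β) = cntM α + cntM β := by
  rw [ofFn_multiset (sOdd α β), ofFn_multiset (sEvn α β), ← Finset.sum_add_distrib]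
  have h1 : ∀ t ∈ Finset.range τ,
      ({pad (sOdd α β) t} : Multiset ℕ) + {pad (sEvn α β) t}
        = ({mrgF α β (2*t)} : Multiset ℕ) + {mrgF α β (2*t+1)} := by
    intro t ht
    have htl : t < τ := by simpa using ht
    rw [pad_lt _ t htl, pad_lt _ t htl]; rfl
  rw [Finset.sum_congr rfl h1, ← sum_range_two_mul τ (fun i => ({mrgF α β i} : Multiset ℕ)),
    finset_sum_singleton_map, mrg_multiset]

lemma mrgF_mem (j : ℕ) (hj : j < 2*τ) : mrgF α β j ∈ cntM α + cntM β := by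
  rw [← mrg_multiset α β]
  exact Multiset.mem_map.2 ⟨j, by simpa using hj, rfl⟩

variable {d M : ℕ} {b c s r : Fin M → ℕ}

lemma cntM_mem_bounds {v : Fin τ → ℕ} (hv : Admissible τ d M b c s r v) :
    ∀ x ∈ cntM v, 1 ≤ x ∧ x ≤ d := by
  intro x hx
  have : x ∈ List.ofFn v := hx
  rw [List.mem_ofFn] at this
  obtain ⟨k, rfl⟩ := this
  exact hv.mem k

/-- Count of a tuple's entries in an interval, recast over `Finset.range`. -/
lemma count_fin_eq_range (g : ℕ → ℕ) (Q : ℕ → Prop) [DecidablePred Q] :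
    (Finset.univ.filter (fun t : Fin τ => Q (g t.1))).card
      = ((Finset.range τ).filter (fun j => Q (g j))).card := by
  rw [Finset.card_filter, Finset.card_filter,
    ← Fin.sum_univ_eq_sum_range (fun j => if Q (g j) then 1 else 0) τ]

lemma admissible_split {hα : Admissible τ d M b c s r α} {hβ : Admissible τ d M b c s r β}
    (hsr : ∀ i, s i ≤ r i) :
    Admissible τ d M b c s r (sOdd α β) ∧ Admissible τ d M b c s r (sEvn α β) := by
  have hmem : ∀ k : Fin τ, ∀ j : ℕ, j < 2*τ → 1 ≤ mrgF α β j ∧ mrgF α β j ≤ d := by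
    intro k j hj
    have := mrgF_mem α β j hj
    rcases Multiset.mem_add.1 this with h | h
    · exact cntM_mem_bounds hα _ h
    · exact cntM_mem_bounds hβ _ h
  -- counting part
  have hcount : ∀ i : Fin M,
      (c i ≤ (Finset.univ.filter fun t : Fin τ => s i ≤ sOdd α β t ∧ sOdd α β t ≤ r i).card ∧
        (Finset.univ.filter fun t : Fin τ => s i ≤ sOdd α β t ∧ sOdd α β t ≤ r i).card ≤ b i) ∧
      (c i ≤ (Finset.univ.filter fun t : Fin τ => s i ≤ sEvn α β t ∧ sEvn α β t ≤ r i).card ∧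
        (Finset.univ.filter fun t : Fin τ => s i ≤ sEvn α β t ∧ sEvn α β t ≤ r i).card ≤ b i) := by
    intro i
    classical
    set si := s i with hsi
    set ri := r i with hri
    set P1 : ℕ → Prop := fun j => mrgF α β j < si with hP1
    set P2 : ℕ → Prop := fun j => mrgF α β j ≤ ri with hP2
    set k1 := ((Finset.range (2*τ)).filter P1).card with hk1
    set k2 := ((Finset.range (2*τ)).filter P2).card with hk2
    have iff1 : ∀ j, j < 2*τ → (P1 j ↔ j < k1) :=
      lowerset_iff (2*τ) P1 (fun i' j' hij hj hPj =>
        lt_of_le_of_lt (mrgF_mono α β i' j' hij hj) hPj)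
    have iff2 : ∀ j, j < 2*τ → (P2 j ↔ j < k2) :=
      lowerset_iff (2*τ) P2 (fun i' j' hij hj hPj =>
        le_trans (mrgF_mono α β i' j' hij hj) hPj)
    have hk12 : k1 ≤ k2 := by
      apply Finset.card_le_card
      intro j hj
      have hj1 := Finset.mem_filter.1 hj
      refine Finset.mem_filter.2 ⟨hj1.1, ?_⟩
      have := hsr i
      have := hj1.2
      simp only [hP1] at this
      simp only [hP2]
      omega
    have hk2le : k2 ≤ 2*τ := le_trans (Finset.card_filter_le _ _) (by simp)
    -- total count over merged
    have hcα := hα.count i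
    have hcβ := hβ.count i
    set cα := (Finset.univ.filter fun k : Fin τ => si ≤ α k ∧ α k ≤ ri).card with hcad
    set cβ := (Finset.univ.filter fun k : Fin τ => si ≤ β k ∧ β k ≤ ri).card with hcbd
    have hcατ : cα ≤ τ := le_trans (Finset.card_filter_le _ _) (by simp)
    have hcβτ : cβ ≤ τ := le_trans (Finset.card_filter_le _ _) (by simp)
    have htot : cα + cβ = k2 - k1 := by
      have e1 : Multiset.countP (fun x => si ≤ x ∧ x ≤ ri) (cntM α + cntM β) = cα + cβ := by
        rw [Multiset.countP_add, countP_cntM, countP_cntM]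
      have e2 : Multiset.countP (fun x => si ≤ x ∧ x ≤ ri) (cntM α + cntM β)
          = ((Finset.range (2*τ)).filter (fun j => si ≤ mrgF α β j ∧ mrgF α β j ≤ ri)).card := by
        rw [← mrg_multiset α β, Multiset.countP_map]
        rfl
      have e3 : (Finset.range (2*τ)).filter (fun j => si ≤ mrgF α β j ∧ mrgF α β j ≤ ri)
          = Finset.Ico k1 k2 := by
        ext j
        simp only [Finset.mem_filter, Finset.mem_range, Finset.mem_Ico]
        constructor
        · rintro ⟨hjr, hsle, hrle⟩
          constructor
          · by_contra hlt
            push_neg at hlt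
            have := (iff1 j hjr).2 hlt
            simp only [hP1] at this; omega
          · exact (iff2 j hjr).1 hrle
        · rintro ⟨hj1, hj2⟩
          have hjr : j < 2*τ := lt_of_lt_of_le hj2 hk2le
          refine ⟨hjr, ?_, (iff2 j hjr).2 hj2⟩
          by_contra hlt
          push_neg at hlt
          have : P1 j := by simp only [hP1]; omega
          have := (iff1 j hjr).1 this
          omega
      have e5 := e1.symm.trans e2
      rw [e3, Nat.card_Ico] at e5
      exact e5
    obtain ⟨hcα1, hcα2⟩ := hcα
    obtain ⟨hcβ1, hcβ2⟩ := hcβ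
    constructor
    · -- sOdd
      have e4 := count_fin_eq_range (τ := τ) (fun j => mrgF α β (2*j))
        (fun x => si ≤ x ∧ x ≤ ri)
      have e5 : (Finset.range τ).filter (fun j => si ≤ mrgF α β (2*j) ∧ mrgF α β (2*j) ≤ ri)
          = Finset.Ico ((k1+1)/2) ((k2+1)/2) := by
        ext j
        simp only [Finset.mem_filter, Finset.mem_range, Finset.mem_Ico]
        constructor
        · rintro ⟨hjτ, h1, h2⟩
          have hj2 : 2*j < 2*τ := by omega
          have hk2' := (iff2 _ hj2).1 h2
          have hk1' : k1 ≤ 2*j := by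
            by_contra hlt
            push_neg at hlt
            have := (iff1 _ hj2).2 hlt
            simp only [hP1] at this
            omega
          omega
        · rintro ⟨h1, h2⟩
          have hjτ : j < τ := by omega
          have hj2 : 2*j < 2*τ := by omega
          have hP2j : P2 (2*j) := (iff2 _ hj2).2 (by omega)
          have hnP1 : ¬ P1 (2*j) := fun h => by have := (iff1 _ hj2).1 h; omega
          simp only [hP1, not_lt] at hnP1
          simp only [hP2] at hP2j
          exact ⟨hjτ, hnP1, hP2j⟩
      have ecard : (Finset.univ.filter fun t : Fin τ =>
          si ≤ sOdd α β t ∧ sOdd α β t ≤ ri).card = (k2+1)/2 - (k1+1)/2 := by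
        rw [show (Finset.univ.filter fun t : Fin τ => si ≤ sOdd α β t ∧ sOdd α β t ≤ ri)
            = (Finset.univ.filter fun t : Fin τ =>
                si ≤ mrgF α β (2*t.1) ∧ mrgF α β (2*t.1) ≤ ri) from rfl, e4, e5, Nat.card_Ico]
      rw [ecard]
      omega
    · -- sEvn
      have e4 := count_fin_eq_range (τ := τ) (fun j => mrgF α β (2*j+1))
        (fun x => si ≤ x ∧ x ≤ ri)
      have e5 : (Finset.range τ).filter (fun j => si ≤ mrgF α β (2*j+1) ∧ mrgF α β (2*j+1) ≤ ri)
          = Finset.Ico (k1/2) (k2/2) := by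
        ext j
        simp only [Finset.mem_filter, Finset.mem_range, Finset.mem_Ico]
        constructor
        · rintro ⟨hjτ, h1, h2⟩
          have hj2 : 2*j+1 < 2*τ := by omega
          have hk2' := (iff2 _ hj2).1 h2
          have hk1' : k1 ≤ 2*j+1 := by
            by_contra hlt
            push_neg at hlt
            have := (iff1 _ hj2).2 hlt
            simp only [hP1] at this
            omega
          omega
        · rintro ⟨h1, h2⟩
          have hjτ : j < τ := by omega
          have hj2 : 2*j+1 < 2*τ := by omega
          have hP2j : P2 (2*j+1) := (iff2 _ hj2).2 (by omega)
          have hnP1 : ¬ P1 (2*j+1) := fun h => by have := (iff1 _ hj2).1 h; omega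
          simp only [hP1, not_lt] at hnP1
          simp only [hP2] at hP2j
          exact ⟨hjτ, hnP1, hP2j⟩
      have ecard : (Finset.univ.filter fun t : Fin τ =>
          si ≤ sEvn α β t ∧ sEvn α β t ≤ ri).card = k2/2 - k1/2 := by
        rw [show (Finset.univ.filter fun t : Fin τ => si ≤ sEvn α β t ∧ sEvn α β t ≤ ri)
            = (Finset.univ.filter fun t : Fin τ =>
                si ≤ mrgF α β (2*t.1+1) ∧ mrgF α β (2*t.1+1) ≤ ri) from rfl, e4, e5, Nat.card_Ico]
      rw [ecard]
      omega
  exact ⟨⟨sOdd_mono α β, fun k => hmem k (2*k.1) (by have := k.isLt; omega),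
      fun i => (hcount i).1⟩,
    ⟨sEvn_mono α β, fun k => hmem k (2*k.1+1) (by have := k.isLt; omega),
      fun i => (hcount i).2⟩⟩

end SplitDef

section Sorted
variable {τ d M : ℕ} {b c s r : Fin M → ℕ}

local notation "V" => {x : Fin τ → ℕ // Admissible τ d M b c s r x}

def content (m : Multiset V) : Multiset ℕ := (m.map (fun v => cntM v.1)).sum

@[simp] lemma content_zero : content (0 : Multiset V) = 0 := rfl

@[simp] lemma content_cons (a : V) (m : Multiset V) :
    content (a ::ₘ m) = cntM a.1 + content m := by
  simp [content]

lemma card_content (m : Multiset V) :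
    Multiset.card (content m) = τ * Multiset.card m := by
  induction m using Multiset.induction with
  | empty => simp
  | cons a t ih => simp [ih, cntM_card]; ring

def SortedM (m : Multiset V) : Prop :=
  ∀ x ∈ m, ∀ y ∈ m, PairOrdered x.1 y.1 ∨ PairOrdered y.1 x.1

lemma sortedM_of_le {m m' : Multiset V} (h : m' ≤ m) (hs : SortedM m) : SortedM m' :=
  fun x hx y hy => hs x (Multiset.mem_of_le h hx) y (Multiset.mem_of_le h hy)

lemma exists_min (m : Multiset V) (hm : m ≠ 0) (hs : SortedM m) :
    ∃ μ ∈ m, ∀ x ∈ m, ∀ t, μ.1 t ≤ x.1 t := by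
  induction m using Multiset.induction with
  | empty => exact absurd rfl hm
  | cons a t ih =>
    by_cases ht : t = 0
    · subst ht
      refine ⟨a, Multiset.mem_cons_self a 0, ?_⟩
      intro x hx t'
      rcases Multiset.mem_cons.1 hx with rfl | hx'
      · exact le_refl _
      · simp at hx'
    · have hst : SortedM t := sortedM_of_le (Multiset.le_cons_self t a) hs
      obtain ⟨μ', hμ't, hμ'⟩ := ih ht hst
      rcases hs a (Multiset.mem_cons_self a t) μ' (Multiset.mem_cons_of_mem hμ't) with h | h
      · refine ⟨a, Multiset.mem_cons_self a t, ?_⟩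
        intro x hx t'
        rcases Multiset.mem_cons.1 hx with rfl | hx'
        · exact le_refl _
        · exact le_trans (h.1 t') (hμ' x hx' t')
      · refine ⟨μ', Multiset.mem_cons_of_mem hμ't, ?_⟩
        intro x hx t'
        rcases Multiset.mem_cons.1 hx with rfl | hx'
        · exact h.1 t'
        · exact hμ' x hx' t'

lemma countP_content (p : ℕ → Prop) [DecidablePred p] (m : Multiset V) :
    Multiset.countP p (content m) = ((m.map (fun v => Multiset.countP p (cntM v.1))).sum) := by
  induction m using Multiset.induction with
  | empty => simp
  | cons a t ih => simp [ih, Multiset.countP_add]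

lemma sum_map_le_const {α : Type*} (m : Multiset α) (g : α → ℕ) (C : ℕ)
    (h : ∀ x ∈ m, g x ≤ C) : (m.map g).sum ≤ Multiset.card m * C := by
  induction m using Multiset.induction with
  | empty => simp
  | cons a t ih =>
    simp only [Multiset.map_cons, Multiset.sum_cons, Multiset.card_cons]
    have h1 := h a (Multiset.mem_cons_self a t)
    have h2 := ih (fun x hx => h x (Multiset.mem_cons_of_mem hx))
    calc g a + (t.map g).sum ≤ C + Multiset.card t * C := by omega
      _ = (Multiset.card t + 1) * C := by ring

lemma sum_map_ge_const {α : Type*} (m : Multiset α) (g : α → ℕ) (C : ℕ)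
    (h : ∀ x ∈ m, C ≤ g x) : Multiset.card m * C ≤ (m.map g).sum := by
  induction m using Multiset.induction with
  | empty => simp
  | cons a t ih =>
    simp only [Multiset.map_cons, Multiset.sum_cons, Multiset.card_cons]
    have h1 := h a (Multiset.mem_cons_self a t)
    have h2 := ih (fun x hx => h x (Multiset.mem_cons_of_mem hx))
    have : (Multiset.card t + 1) * C = Multiset.card t * C + C := by ring
    omega

lemma getD_mono_of_sorted (L : List ℕ) (hs : L.Pairwise (· ≤ ·)) :
    ∀ i j : ℕ, i ≤ j → j < L.length → L.getD i 0 ≤ L.getD j 0 := by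
  intro i j hij hj
  have hi : i < L.length := by omega
  rw [List.getD_eq_getElem _ _ hi, List.getD_eq_getElem _ _ hj]
  exact hs.rel_get_of_le (a := ⟨i, hi⟩) (b := ⟨j, hj⟩) hij

lemma getD_sorted_eq (L : List ℕ) (hs : L.Pairwise (· ≤ ·)) (k y : ℕ) (hk : k < L.length)
    (h1 : Multiset.countP (· < y) (L : Multiset ℕ) ≤ k)
    (h2 : k < Multiset.countP (· ≤ y) (L : Multiset ℕ)) : L.getD k 0 = y := by
  have hmono := getD_mono_of_sorted L hs
  have hL : (Finset.range L.length).val.map (fun i => L.getD i 0) = (L : Multiset ℕ) :=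
    map_getD_range L
  set K1 := ((Finset.range L.length).filter (fun j => L.getD j 0 < y)).card with hK1
  set K2 := ((Finset.range L.length).filter (fun j => L.getD j 0 ≤ y)).card with hK2
  have iff1 : ∀ j, j < L.length → (L.getD j 0 < y ↔ j < K1) :=
    lowerset_iff _ _ (fun i' j' hij hj hPj => lt_of_le_of_lt (hmono i' j' hij hj) hPj)
  have iff2 : ∀ j, j < L.length → (L.getD j 0 ≤ y ↔ j < K2) :=
    lowerset_iff _ _ (fun i' j' hij hj hPj => le_trans (hmono i' j' hij hj) hPj)
  have e1 : Multiset.countP (· < y) (L : Multiset ℕ) = K1 := by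
    rw [← hL, Multiset.countP_map]
    rfl
  have e2 : Multiset.countP (· ≤ y) (L : Multiset ℕ) = K2 := by
    rw [← hL, Multiset.countP_map]
    rfl
  rw [e1] at h1
  rw [e2] at h2
  have hle : L.getD k 0 ≤ y := (iff2 k hk).2 h2
  have hnlt : ¬ (L.getD k 0 < y) := fun h => by have := (iff1 k hk).1 h; omega
  omega

lemma filter_val_lt_card (j : ℕ) (hj : j ≤ τ) :
    (Finset.univ.filter (fun k : Fin τ => k.1 < j)).card = j := by
  have := count_fin_eq_range (τ := τ) (fun i => i) (fun x => x < j)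
  rw [this]
  have : (Finset.range τ).filter (fun i => i < j) = Finset.range j := by
    ext i
    simp only [Finset.mem_filter, Finset.mem_range]
    omega
  rw [this, Finset.card_range]

lemma min_orderstat (hττ : 0 < τ) (m : Multiset V) (μ : V) (hμm : μ ∈ m)
    (hmin : ∀ x ∈ m, ∀ t, μ.1 t ≤ x.1 t) (hs : SortedM m) (t : Fin τ) :
    ((content m).sort (· ≤ ·)).getD (t.1 * Multiset.card m) 0 = μ.1 t := by
  set L := (content m).sort (· ≤ ·) with hLdef
  have hLs : L.Pairwise (· ≤ ·) := Multiset.pairwise_sort _ _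
  have hLc : (L : Multiset ℕ) = content m := Multiset.sort_eq _ _
  have hLl : L.length = τ * Multiset.card m := by
    rw [hLdef, Multiset.length_sort, card_content]
  have hcm : 1 ≤ Multiset.card m := by
    rcases Multiset.exists_cons_of_mem hμm with ⟨m', rfl⟩
    simp
  refine getD_sorted_eq L hLs _ _ (by rw [hLl]; have := t.isLt; nlinarith) ?_ ?_
  · -- countP (< μ t) ≤ t.1 * card m
    rw [hLc, countP_content]
    have hbound : ∀ x ∈ m, Multiset.countP (· < μ.1 t) (cntM x.1) ≤ t.1 := by
      intro x hx
      rw [countP_cntM]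
      have hsub : (Finset.univ.filter (fun k : Fin τ => x.1 k < μ.1 t))
          ⊆ (Finset.univ.filter (fun k : Fin τ => k.1 < t.1)) := by
        intro k hk
        have hk1 := (Finset.mem_filter.1 hk).2
        refine Finset.mem_filter.2 ⟨Finset.mem_univ _, ?_⟩
        by_contra hge
        push_neg at hge
        have h1 : μ.1 t ≤ μ.1 k := μ.2.mono (by exact hge : t ≤ k)
        have h2 : μ.1 k ≤ x.1 k := hmin x hx k
        omega
      calc (Finset.univ.filter (fun k : Fin τ => x.1 k < μ.1 t)).card
          ≤ (Finset.univ.filter (fun k : Fin τ => k.1 < t.1)).card := Finset.card_le_card hsub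
        _ = t.1 := filter_val_lt_card t.1 (le_of_lt t.isLt)
    have h := sum_map_le_const m (fun v => Multiset.countP (· < μ.1 t) (cntM v.1)) t.1 hbound
    have hcomm : Multiset.card m * t.1 = t.1 * Multiset.card m := Nat.mul_comm _ _
    omega
  · -- t.1 * card m < countP (≤ μ t)
    rw [hLc]
    rcases Multiset.exists_cons_of_mem hμm with ⟨m', hm'⟩
    rw [hm', content_cons, Multiset.countP_add]
    have hμself : t.1 + 1 ≤ Multiset.countP (· ≤ μ.1 t) (cntM μ.1) := by
      rw [countP_cntM]
      have hsub : (Finset.univ.filter (fun k : Fin τ => k.1 < t.1 + 1))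
          ⊆ (Finset.univ.filter (fun k : Fin τ => μ.1 k ≤ μ.1 t)) := by
        intro k hk
        have hk1 := (Finset.mem_filter.1 hk).2
        refine Finset.mem_filter.2 ⟨Finset.mem_univ _, ?_⟩
        exact μ.2.mono (by exact Nat.lt_succ_iff.1 hk1 : k ≤ t)
      calc t.1 + 1 = (Finset.univ.filter (fun k : Fin τ => k.1 < t.1 + 1)).card :=
            (filter_val_lt_card (t.1+1) t.isLt).symm
        _ ≤ _ := Finset.card_le_card hsub
    have hothers : Multiset.card m' * t.1
        ≤ ((m'.map (fun v => Multiset.countP (· ≤ μ.1 t) (cntM v.1))).sum) := by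
      apply sum_map_ge_const
      intro x hx
      rw [countP_cntM]
      have hxm : x ∈ m := by rw [hm']; exact Multiset.mem_cons_of_mem hx
      have hsub : (Finset.univ.filter (fun k : Fin τ => k.1 < t.1))
          ⊆ (Finset.univ.filter (fun k : Fin τ => x.1 k ≤ μ.1 t)) := by
        intro k hk
        have hk1 := (Finset.mem_filter.1 hk).2
        refine Finset.mem_filter.2 ⟨Finset.mem_univ _, ?_⟩
        rcases hs μ hμm x hxm with h | h
        · -- PairOrdered μ x : x k ≤ μ (k+1) ≤ μ t
          have hk2 : k.1 + 1 < τ := by have := t.isLt; omega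
          have h1 := h.2 k ⟨k.1+1, hk2⟩ rfl
          have h2 : μ.1 ⟨k.1+1, hk2⟩ ≤ μ.1 t := μ.2.mono (by
            show (⟨k.1+1, hk2⟩ : Fin τ) ≤ t
            exact hk1)
          omega
        · -- PairOrdered x μ : x k ≤ μ k ≤ μ t
          have h1 := h.1 k
          have h2 : μ.1 k ≤ μ.1 t := μ.2.mono (le_of_lt (by exact hk1 : k < t))
          omega
      calc t.1 = (Finset.univ.filter (fun k : Fin τ => k.1 < t.1)).card :=
            (filter_val_lt_card t.1 (le_of_lt t.isLt)).symm
        _ ≤ _ := Finset.card_le_card hsub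
    rw [countP_content]
    have hcc : Multiset.card (μ ::ₘ m') = Multiset.card m' + 1 := by simp
    have hmc := Nat.mul_comm (Multiset.card m') t.1
    have hexp : t.1 * Multiset.card (μ ::ₘ m') = t.1 * Multiset.card m' + t.1 := by
      rw [hcc]; ring
    omega

lemma sorted_unique (hττ : 0 < τ) :
    ∀ (n : ℕ) (m m' : Multiset V), Multiset.card m = n → SortedM m → SortedM m' →
      content m = content m' → m = m' := by
  intro n
  induction n with
  | zero =>
    intro m m' hc _ _ hcont
    have hm : m = 0 := Multiset.card_eq_zero.1 hc
    subst hm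
    have : Multiset.card (content m') = 0 := by rw [← hcont]; simp [content]
    rw [card_content] at this
    have : Multiset.card m' = 0 := by
      rcases Nat.mul_eq_zero.1 this with h | h
      · omega
      · exact h
    exact (Multiset.card_eq_zero.1 this).symm
  | succ n ih =>
    intro m m' hc hs hs' hcont
    have hc' : Multiset.card m' = n + 1 := by
      have h1 : Multiset.card (content m) = Multiset.card (content m') := by rw [hcont]
      rw [card_content, card_content, hc] at h1
      exact (Nat.eq_of_mul_eq_mul_left hττ h1.symm)
    have hm0 : m ≠ 0 := by intro h; rw [h] at hc; simp at hc
    have hm0' : m' ≠ 0 := by intro h; rw [h] at hc'; simp at hc'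
    obtain ⟨μ, hμm, hμmin⟩ := exists_min m hm0 hs
    obtain ⟨μ', hμ'm, hμ'min⟩ := exists_min m' hm0' hs'
    have hμeq : μ = μ' := by
      apply Subtype.ext
      funext t
      have e1 := min_orderstat hττ m μ hμm hμmin hs t
      have e2 := min_orderstat hττ m' μ' hμ'm hμ'min hs' t
      rw [hcont] at e1
      rw [hc] at e1
      rw [hc'] at e2
      rw [← e1, ← e2]
    subst hμeq
    rcases Multiset.exists_cons_of_mem hμm with ⟨m₀, hm₀⟩
    rcases Multiset.exists_cons_of_mem hμ'm with ⟨m₀', hm₀'⟩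
    have hcont0 : content m₀ = content m₀' := by
      have : cntM μ.1 + content m₀ = cntM μ.1 + content m₀' := by
        rw [← content_cons, ← content_cons, ← hm₀, ← hm₀', hcont]
      exact add_left_cancel this
    have hcard0 : Multiset.card m₀ = n := by
      rw [hm₀] at hc; simp at hc; omega
    have heq := ih m₀ m₀' hcard0
      (sortedM_of_le (by rw [hm₀]; exact Multiset.le_cons_self _ _) hs)
      (sortedM_of_le (by rw [hm₀']; exact Multiset.le_cons_self _ _) hs')
      hcont0
    rw [hm₀, hm₀', heq]

end Sorted

section Measure
variable {τ : ℕ}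

def f1 (v : Fin τ → ℕ) : ℕ := ∑ t : Fin τ, (τ - t.1) * v t

def f2 (v : Fin τ → ℕ) : ℕ := (∑ t : Fin τ, v t) ^ 2

lemma sum_prefix_weights (n : ℕ) (g : ℕ → ℕ) :
    ∑ T ∈ Finset.range n, (∑ i ∈ Finset.range (T+1), g i)
      = ∑ i ∈ Finset.range n, (n - i) * g i := by
  induction n with
  | zero => simp
  | succ n ih =>
    rw [Finset.sum_range_succ, ih]
    have h1 : ∀ i ∈ Finset.range n, (n + 1 - i) * g i = (n - i) * g i + g i := by
      intro i hi
      have : i < n := by simpa using hi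
      have e : n + 1 - i = (n - i) + 1 := by omega
      rw [e]; ring
    rw [show (∑ i ∈ Finset.range (n+1), (n+1-i) * g i)
        = (∑ i ∈ Finset.range n, (n+1-i)*g i) + (n+1-n)*g n from Finset.sum_range_succ _ n,
      Finset.sum_congr rfl h1, Finset.sum_add_distrib]
    have h2 : (n + 1 - n) * g n = g n := by
      have e : n + 1 - n = 1 := by omega
      rw [e]; ring
    rw [h2]
    have h3 : ∑ i ∈ Finset.range (n+1), g i = (∑ i ∈ Finset.range n, g i) + g n :=
      Finset.sum_range_succ _ n
    omega

lemma f1_eq_prefix (v : Fin τ → ℕ) :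
    f1 v = ∑ T ∈ Finset.range τ, (∑ i ∈ Finset.range (T+1), pad v i) := by
  rw [sum_prefix_weights, f1, ← Fin.sum_univ_eq_sum_range (fun i => (τ - i) * pad v i) τ]
  refine Finset.sum_congr rfl fun t _ => ?_
  rw [pad_lt v t.1 t.isLt]

section SplitMeasure
variable (α β : Fin τ → ℕ)

/-- prefix multiset of the pair -/
def prefMS (T : ℕ) : Multiset ℕ :=
  ∑ i ∈ Finset.range T, (({pad α i} : Multiset ℕ) + {pad β i})

lemma prefMS_card (T : ℕ) : Multiset.card (prefMS α β T) = 2 * T := by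
  induction T with
  | zero => simp [prefMS]
  | succ T ih =>
    rw [prefMS, Finset.sum_range_succ, ← prefMS]
    simp [ih]; omega

lemma prefMS_sum (T : ℕ) :
    (prefMS α β T).sum = ∑ i ∈ Finset.range T, (pad α i + pad β i) := by
  induction T with
  | zero => simp [prefMS]
  | succ T ih =>
    rw [prefMS, Finset.sum_range_succ, ← prefMS, Finset.sum_range_succ, ← ih]
    simp
    omega

lemma prefMS_top : prefMS α β τ = cntM α + cntM β := by
  rw [prefMS, ofFn_multiset α, ofFn_multiset β, ← Finset.sum_add_distrib]

lemma prefMS_le (T : ℕ) (hT : T ≤ τ) :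
    prefMS α β T ≤ (Finset.range (2*τ)).val.map (mrgF α β) := by
  rw [mrg_multiset, ← prefMS_top]
  rw [prefMS, prefMS, Finset.range_eq_Ico, Finset.range_eq_Ico,
    ← Finset.sum_Ico_consecutive _ (Nat.zero_le T) hT]
  exact Multiset.le_add_right _ _

/-- main inequality: the split does not increase `f1`. -/
lemma split_f1_le :
    f1 (sOdd α β) + f1 (sEvn α β) ≤ f1 α + f1 β := by
  rw [f1_eq_prefix, f1_eq_prefix, f1_eq_prefix, f1_eq_prefix,
    ← Finset.sum_add_distrib, ← Finset.sum_add_distrib]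
  refine Finset.sum_le_sum fun T hT => ?_
  have hTτ : T < τ := by simpa using hT
  -- LHS: sum of first 2(T+1) merged values
  have hL : (∑ i ∈ Finset.range (T+1), pad (sOdd α β) i)
      + (∑ i ∈ Finset.range (T+1), pad (sEvn α β) i)
      = ∑ j ∈ Finset.range (2*(T+1)), mrgF α β j := by
    rw [sum_range_two_mul, ← Finset.sum_add_distrib]
    refine Finset.sum_congr rfl fun i hi => ?_
    have hiT : i < T + 1 := by simpa using hi
    have hiτ : i < τ := by omega
    rw [pad_lt _ i hiτ, pad_lt _ i hiτ]
    rfl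
  have hks := kSmallest (2*τ) (mrgF α β) (mrgF_mono α β) (2*(T+1)) (prefMS α β (T+1))
    (by omega) (prefMS_le α β (T+1) (by omega)) (prefMS_card α β (T+1))
  have hsum := prefMS_sum α β (T+1)
  have h1 := hks.1
  rw [hsum] at h1
  rw [hL, ← Finset.sum_add_distrib]
  exact h1

/-- equality in `f1` forces equality of all columns. -/
lemma split_f1_eq_columns
    (heq : f1 (sOdd α β) + f1 (sEvn α β) = f1 α + f1 β) :
    ∀ t : Fin τ, ({α t, β t} : Multiset ℕ) = {sOdd α β t, sEvn α β t} := by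
  -- termwise equality of prefix sums
  have hterm : ∀ T ∈ Finset.range τ,
      prefMS α β (T+1) = (Finset.range (2*(T+1))).val.map (mrgF α β) := by
    have hle : ∀ T ∈ Finset.range τ,
        (∑ j ∈ Finset.range (2*(T+1)), mrgF α β j)
          ≤ ∑ i ∈ Finset.range (T+1), (pad α i + pad β i) := by
      intro T hT
      have hTτ : T < τ := by simpa using hT
      have hks := kSmallest (2*τ) (mrgF α β) (mrgF_mono α β) (2*(T+1)) (prefMS α β (T+1))
        (by omega) (prefMS_le α β (T+1) (by omega)) (prefMS_card α β (T+1))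
      have h1 := hks.1
      rw [prefMS_sum] at h1
      exact h1
    -- rewrite heq as equality of sums
    have heq2 : ∑ T ∈ Finset.range τ, (∑ j ∈ Finset.range (2*(T+1)), mrgF α β j)
        = ∑ T ∈ Finset.range τ, (∑ i ∈ Finset.range (T+1), (pad α i + pad β i)) := by
      have e1 : ∑ T ∈ Finset.range τ, (∑ j ∈ Finset.range (2*(T+1)), mrgF α β j)
          = f1 (sOdd α β) + f1 (sEvn α β) := by
        rw [f1_eq_prefix, f1_eq_prefix, ← Finset.sum_add_distrib]
        refine Finset.sum_congr rfl fun T hT => ?_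
        have hTτ : T < τ := by simpa using hT
        rw [sum_range_two_mul, ← Finset.sum_add_distrib]
        refine Finset.sum_congr rfl fun i hi => ?_
        have hiT : i < T + 1 := by simpa using hi
        have hiτ : i < τ := by omega
        rw [pad_lt _ i hiτ, pad_lt _ i hiτ]
        rfl
      have e2 : ∑ T ∈ Finset.range τ, (∑ i ∈ Finset.range (T+1), (pad α i + pad β i))
          = f1 α + f1 β := by
        rw [f1_eq_prefix, f1_eq_prefix, ← Finset.sum_add_distrib]
        exact Finset.sum_congr rfl fun T hT => Finset.sum_add_distrib
      rw [e1, e2, heq]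
    have htermsum := (Finset.sum_eq_sum_iff_of_le hle).1 heq2
    intro T hT
    have hTτ : T < τ := by simpa using hT
    have hks := kSmallest (2*τ) (mrgF α β) (mrgF_mono α β) (2*(T+1)) (prefMS α β (T+1))
      (by omega) (prefMS_le α β (T+1) (by omega)) (prefMS_card α β (T+1))
    apply hks.2
    rw [prefMS_sum]
    exact (htermsum T hT).symm
  -- now extract columns
  intro t
  have h0 : prefMS α β t.1 = (Finset.range (2*t.1)).val.map (mrgF α β) := by
    rcases Nat.eq_zero_or_pos t.1 with h | h
    · rw [h]; simp [prefMS]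
    · have := hterm (t.1 - 1) (by simp; omega)
      have e : t.1 - 1 + 1 = t.1 := by omega
      rw [e] at this
      exact this
  have h1 : prefMS α β (t.1+1) = (Finset.range (2*(t.1+1))).val.map (mrgF α β) :=
    hterm t.1 (by simpa using t.isLt)
  have e1 : prefMS α β (t.1+1) = prefMS α β t.1 + (({pad α t.1} : Multiset ℕ) + {pad β t.1}) := by
    rw [prefMS, Finset.sum_range_succ, ← prefMS]
  have e2 : (Finset.range (2*(t.1+1))).val.map (mrgF α β)
      = (Finset.range (2*t.1)).val.map (mrgF α β)
        + (({mrgF α β (2*t.1)} : Multiset ℕ) + {mrgF α β (2*t.1+1)}) := by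
    have e3 : 2*(t.1+1) = (2*t.1+1)+1 := by omega
    rw [e3, range_succ_val, Multiset.map_cons, range_succ_val, Multiset.map_cons]
    simp only [← Multiset.singleton_add]
    abel
  rw [e1, e2, h0] at h1
  have h2 := add_left_cancel h1
  have hα : pad α t.1 = α t := by rw [pad_lt _ t.1 t.isLt]
  have hβ : pad β t.1 = β t := by rw [pad_lt _ t.1 t.isLt]
  rw [hα, hβ] at h2
  have : ({α t, β t} : Multiset ℕ) = ({α t} : Multiset ℕ) + {β t} := by
    rw [Multiset.singleton_add]
    rfl
  rw [this, h2]
  rw [Multiset.singleton_add]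
  rfl

end SplitMeasure

lemma pair_eq {a b c e : ℕ} (h : ({a, b} : Multiset ℕ) = {c, e}) :
    (a = c ∧ b = e) ∨ (a = e ∧ b = c) := by
  have ha : a ∈ ({c, e} : Multiset ℕ) := by rw [← h]; exact Multiset.mem_cons_self _ _
  rcases Multiset.mem_cons.1 ha with h1 | h1
  · left
    refine ⟨h1, ?_⟩
    rw [h1] at h
    exact Multiset.singleton_inj.1 ((Multiset.cons_inj_right c).1 h)
  · have h1 : a = e := by simpa using h1
    have hc : c ∈ ({a, b} : Multiset ℕ) := by rw [h]; exact Multiset.mem_cons_self _ _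
    rcases Multiset.mem_cons.1 hc with h2 | h2
    · left
      refine ⟨h2.symm, ?_⟩
      rw [← h2] at h
      exact Multiset.singleton_inj.1 ((Multiset.cons_inj_right c).1 h)
    · have h2 : c = b := by simpa using h2
      right
      exact ⟨h1, h2.symm⟩

end Measure

section F2sec
variable {τ : ℕ} (α β : Fin τ → ℕ)

lemma pairOrdered_refl {v : Fin τ → ℕ} (h : Monotone v) : PairOrdered v v :=
  ⟨fun t => le_refl _, fun t t' ht => h (by omega : t ≤ t')⟩

lemma split_f2_strict
    (hcols : ∀ t : Fin τ, ({α t, β t} : Multiset ℕ) = {sOdd α β t, sEvn α β t})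
    (hns : Nonsorted α β) :
    f2 α + f2 β < f2 (sOdd α β) + f2 (sEvn α β) := by
  have hcase : ∀ t, (α t = sOdd α β t ∧ β t = sEvn α β t)
      ∨ (α t = sEvn α β t ∧ β t = sOdd α β t) := fun t => pair_eq (hcols t)
  have hoe : ∀ t, sOdd α β t ≤ sEvn α β t := (pairOrdered_split α β).1
  have hlo : ∀ t, sOdd α β t ≤ α t := by
    intro t
    rcases hcase t with ⟨h1, _⟩ | ⟨h1, _⟩
    · omega
    · have := hoe t; omega
  have hhi : ∀ t, α t ≤ sEvn α β t := by
    intro t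
    rcases hcase t with ⟨h1, _⟩ | ⟨h1, _⟩
    · have := hoe t; omega
    · omega
  have hsumt : ∀ t, α t + β t = sOdd α β t + sEvn α β t := by
    intro t
    rcases hcase t with ⟨h1, h2⟩ | ⟨h1, h2⟩ <;> omega
  have hne1 : ¬ (∀ t, α t = sOdd α β t) := by
    intro hall
    apply hns
    left
    have hβe : ∀ t, β t = sEvn α β t := by
      intro t
      rcases hcase t with ⟨_, h2⟩ | ⟨h1, h2⟩
      · exact h2
      · have h3 := hall t; omega
    refine ⟨fun t => ?_, fun t t' ht => ?_⟩
    · rw [hall t, hβe t]; exact hoe t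
    · rw [hβe t, hall t']
      exact (pairOrdered_split α β).2 t t' ht
  have hne2 : ¬ (∀ t, α t = sEvn α β t) := by
    intro hall
    apply hns
    right
    have hβo : ∀ t, β t = sOdd α β t := by
      intro t
      rcases hcase t with ⟨h1, h2⟩ | ⟨_, h2⟩
      · have h3 := hall t; have := hoe t; omega
      · exact h2
    refine ⟨fun t => ?_, fun t t' ht => ?_⟩
    · rw [hall t, hβo t]; exact hoe t
    · rw [hβo t', hall t]
      exact (pairOrdered_split α β).2 t t' ht
  push_neg at hne1 hne2
  obtain ⟨t1, ht1⟩ := hne1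
  obtain ⟨t2, ht2⟩ := hne2
  have hso : ∑ t : Fin τ, sOdd α β t < ∑ t : Fin τ, α t := by
    refine Finset.sum_lt_sum (fun t _ => hlo t) ⟨t1, Finset.mem_univ _, ?_⟩
    have := hlo t1; omega
  have hse : ∑ t : Fin τ, α t < ∑ t : Fin τ, sEvn α β t := by
    refine Finset.sum_lt_sum (fun t _ => hhi t) ⟨t2, Finset.mem_univ _, ?_⟩
    have := hhi t2; omega
  have hS : (∑ t : Fin τ, α t) + (∑ t : Fin τ, β t)
      = (∑ t : Fin τ, sOdd α β t) + (∑ t : Fin τ, sEvn α β t) := by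
    rw [← Finset.sum_add_distrib, ← Finset.sum_add_distrib]
    exact Finset.sum_congr rfl fun t _ => hsumt t
  rw [f2, f2, f2, f2]
  set sa := ∑ t : Fin τ, α t
  set sb := ∑ t : Fin τ, β t
  set so := ∑ t : Fin τ, sOdd α β t
  set se := ∑ t : Fin τ, sEvn α β t
  have hZ : (sa:ℤ)^2 + (sb:ℤ)^2 < (so:ℤ)^2 + (se:ℤ)^2 := by
    have h1 : (so:ℤ) < sa := by exact_mod_cast hso
    have h2 : (sa:ℤ) < se := by exact_mod_cast hse
    have h3 : (sa:ℤ) + sb = so + se := by exact_mod_cast hS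
    nlinarith [mul_pos (sub_pos.2 h1) (sub_pos.2 h2)]
  exact_mod_cast hZ

lemma f1_pos (hττ : 0 < τ) {v : Fin τ → ℕ} (hv : ∀ k, 1 ≤ v k) : 1 ≤ f1 v := by
  have ht : (⟨τ-1, by omega⟩ : Fin τ) ∈ (Finset.univ : Finset (Fin τ)) := Finset.mem_univ _
  have hterm : 1 ≤ (τ - (τ-1)) * v ⟨τ-1, by omega⟩ := by
    have h1 : τ - (τ-1) = 1 := by omega
    rw [h1]
    simpa using hv _
  calc (1:ℕ) ≤ (τ - (τ-1 : ℕ)) * v ⟨τ-1, by omega⟩ := hterm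
    _ ≤ f1 v := Finset.single_le_sum (f := fun t : Fin τ => (τ - t.1) * v t)
        (fun t _ => Nat.zero_le _) ht

end F2sec

noncomputable def toVar (d0 : ℕ) (hd0 : 1 ≤ d0) : ℕ → (Fin d0 →₀ ℕ) := fun x =>
  Finsupp.single ⟨min (x-1) (d0-1), by omega⟩ 1

noncomputable def EV (d0 : ℕ) (hd0 : 1 ≤ d0) (E : Multiset ℕ) : Fin d0 →₀ ℕ :=
  (E.map (toVar d0 hd0)).sum

lemma EV_add (d0 : ℕ) (hd0 : 1 ≤ d0) (E E' : Multiset ℕ) :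
    EV d0 hd0 (E + E') = EV d0 hd0 E + EV d0 hd0 E' := by
  show (Multiset.map _ (E + E')).sum = _
  rw [Multiset.map_add, Multiset.sum_add]
  rfl

lemma cntM_eq_sum_univ {n : ℕ} (v : Fin n → ℕ) :
    cntM v = ∑ k : Fin n, ({v k} : Multiset ℕ) := by
  rw [ofFn_multiset, ← Fin.sum_univ_eq_sum_range (fun i => ({pad v i} : Multiset ℕ)) n]
  exact Finset.sum_congr rfl fun k _ => by rw [pad_lt v k.1 k.isLt]

lemma EV_sum_singletons (d0 : ℕ) (hd0 : 1 ≤ d0) {ι : Type*} (sf : Finset ι) (g : ι → ℕ) :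
    EV d0 hd0 (∑ k ∈ sf, ({g k} : Multiset ℕ)) = ∑ k ∈ sf, toVar d0 hd0 (g k) := by
  classical
  induction sf using Finset.induction with
  | empty =>
    show (Multiset.map _ _).sum = _
    simp
  | insert _ _ h ih =>
    rw [Finset.sum_insert h, Finset.sum_insert h, EV_add, ← ih]
    congr 1
    show (Multiset.map _ _).sum = _
    simp

lemma EV_cntM (d0 : ℕ) (hd0 : 1 ≤ d0) {n : ℕ} (v : Fin n → ℕ) :
    EV d0 hd0 (cntM v) = ∑ k : Fin n, toVar d0 hd0 (v k) := by
  rw [cntM_eq_sum_univ, EV_sum_singletons]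

section Poly
variable {τ d M : ℕ} {b c s r : Fin M → ℕ} {K : Type*} [Field K] (hd : 1 ≤ d)

local notation "V" => {x : Fin τ → ℕ // Admissible τ d M b c s r x}

/-- exponent vector of a tuple -/
noncomputable def evF (v : V) : Fin d →₀ ℕ := EV d hd (cntM v.1)

lemma toVar_admissible {v : Fin τ → ℕ} (hv : Admissible τ d M b c s r v) (k : Fin τ) :
    toVar d hd (v k) = Finsupp.single (⟨v k - 1, by have := hv.mem k; omega⟩ : Fin d) 1 := by
  show Finsupp.single _ 1 = _
  congr 1
  have := hv.mem k
  exact Fin.ext (by simp; omega)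

lemma X_eq_monomial' {σ : Type*} (n : σ) :
    (X n : MvPolynomial σ K) = monomial (Finsupp.single n 1) 1 := by
  rw [← pow_one (X n), X_pow_eq_monomial]

lemma prod_monomial {σ ι : Type*} (sf : Finset ι) (g : ι → (σ →₀ ℕ)) :
    (∏ i ∈ sf, (monomial (g i) 1 : MvPolynomial σ K))
      = monomial (∑ i ∈ sf, g i) 1 := by
  classical
  induction sf using Finset.induction with
  | empty => simp
  | insert _ _ h ih =>
    rw [Finset.prod_insert h, Finset.sum_insert h, ih, monomial_mul, one_mul]

lemma piSV_X (v : V) :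
    piSV τ d M b c s r K (X v) = monomial (evF hd v) 1 := by
  rw [piSV, aeval_X]
  have h1 : ∀ k : Fin τ,
      (X (⟨v.1 k - 1, by have := v.2.mem k; omega⟩ : Fin d) : MvPolynomial (Fin d) K)
        = monomial (toVar d hd (v.1 k)) 1 := by
    intro k
    rw [toVar_admissible hd v.2 k, X_eq_monomial']
  rw [Finset.prod_congr rfl (fun k _ => h1 k), prod_monomial, evF, EV_cntM]

noncomputable def ΦF (u : V →₀ ℕ) : Fin d →₀ ℕ := u.sum fun v n => n • evF hd v

lemma piSV_monomial (u : V →₀ ℕ) (r0 : K) :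
    piSV τ d M b c s r K (monomial u r0) = monomial (ΦF hd u) r0 := by
  rw [piSV, aeval_monomial, ΦF]
  have h1 : (Finsupp.prod u fun v n =>
      (∏ k : Fin τ, (X (⟨v.1 k - 1, by have := v.2.mem k; omega⟩ : Fin d)
        : MvPolynomial (Fin d) K)) ^ n)
      = Finsupp.prod u fun v n => monomial (n • evF hd v) 1 := by
    refine Finset.prod_congr rfl fun v hv => ?_
    have h2 : (∏ k : Fin τ, (X (⟨v.1 k - 1, by have := v.2.mem k; omega⟩ : Fin d)
        : MvPolynomial (Fin d) K)) = monomial (evF hd v) 1 := by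
      have h3 := piSV_X (τ := τ) (b := b) (c := c) (s := s) (r := r) (K := K) hd v
      rw [piSV, aeval_X] at h3
      exact h3
    beta_reduce
    rw [h2, monomial_pow, one_pow]
  rw [h1]
  have h3 : (Finsupp.prod u fun v n => (monomial (n • evF hd v) (1:K)))
      = monomial (u.sum fun v n => n • evF hd v) 1 :=
    prod_monomial u.support (fun v => (u v) • evF hd v)
  rw [h3, algebraMap_eq, C_mul_monomial, mul_one]

lemma ker_coeff {p : MvPolynomial V K} (hp : piSV τ d M b c s r K p = 0) (w : Fin d →₀ ℕ) :
    ∑ u ∈ p.support.filter (fun u => ΦF hd u = w), coeff u p = 0 := by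
  have h1 : piSV τ d M b c s r K p = ∑ u ∈ p.support, monomial (ΦF hd u) (coeff u p) := by
    conv_lhs => rw [as_sum p]
    rw [map_sum]
    exact Finset.sum_congr rfl fun u _ => piSV_monomial hd u _
  have h2 : coeff w (∑ u ∈ p.support, monomial (ΦF hd u) (coeff u p)) = 0 := by
    rw [← h1, hp]
    simp
  rw [coeff_sum] at h2
  rw [Finset.sum_filter]
  have h3 : ∑ u ∈ p.support, (if ΦF hd u = w then coeff u p else 0)
      = ∑ u ∈ p.support, coeff w (monomial (ΦF hd u) (coeff u p)) :=
    Finset.sum_congr rfl fun u _ => by rw [coeff_monomial]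
  rw [h3]
  exact h2

lemma mem_span_binomials :
    ∀ (n : ℕ) (p : MvPolynomial V K), p.support.card ≤ n →
    (∀ w, ∑ u ∈ p.support.filter (fun u => ΦF hd u = w), coeff u p = 0) →
    p ∈ Submodule.span K {q : MvPolynomial V K |
      ∃ u u' : V →₀ ℕ, ΦF hd u = ΦF hd u' ∧ q = monomial u 1 - monomial u' 1} := by
  intro n
  induction n with
  | zero =>
    intro p hc _
    have h0 : p.support = ∅ := Finset.card_eq_zero.1 (le_antisymm hc (Nat.zero_le _))
    have h1 : p = 0 := support_eq_empty.1 h0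
    rw [h1]
    exact Submodule.zero_mem _
  | succ n ih =>
    intro p hc hfib
    by_cases hp0 : p = 0
    · rw [hp0]; exact Submodule.zero_mem _
    · have hps : p.support.Nonempty :=
        Finset.nonempty_iff_ne_empty.2 (fun h => hp0 (support_eq_empty.1 h))
      obtain ⟨u0, hu0⟩ := hps
      set F := p.support.filter (fun u => ΦF hd u = ΦF hd u0) with hF
      have hu0F : u0 ∈ F := Finset.mem_filter.2 ⟨hu0, rfl⟩
      set rr := ∑ u ∈ F, coeff u p • ((monomial u (1:K)) - monomial u0 1) with hrr
      have hrmem : rr ∈ Submodule.span K {q : MvPolynomial V K |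
          ∃ u u' : V →₀ ℕ, ΦF hd u = ΦF hd u' ∧ q = monomial u 1 - monomial u' 1} := by
        refine Submodule.sum_mem _ fun u hu => Submodule.smul_mem _ _ (Submodule.subset_span ?_)
        exact ⟨u, u0, (Finset.mem_filter.1 hu).2, rfl⟩
      have hcoeffr : ∀ x, coeff x rr = if x ∈ F then coeff x p else 0 := by
        intro x
        rw [hrr, coeff_sum]
        have h1 : ∀ u ∈ F, coeff x (coeff u p • ((monomial u (1:K)) - monomial u0 1))
            = (if u = x then coeff u p else 0) - (if u0 = x then coeff u p else 0) := by
          intro u hu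
          rw [coeff_smul, coeff_sub, coeff_monomial, coeff_monomial, smul_eq_mul, mul_sub]
          congr 1 <;> (by_cases h : u = x <;> by_cases h' : u0 = x <;> simp [h, h'] <;> ring)
        rw [Finset.sum_congr rfl h1, Finset.sum_sub_distrib]
        have h2 : ∑ u ∈ F, (if u = x then coeff u p else 0)
            = if x ∈ F then coeff x p else 0 := Finset.sum_ite_eq' F x (fun u => coeff u p)
        have h3 : ∑ u ∈ F, (if u0 = x then coeff u p else 0) = 0 := by
          by_cases h' : u0 = x
          · simp only [h', if_true]
            exact hfib (ΦF hd u0)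
          · simp [h']
        rw [h2, h3, sub_zero]
      set q := p - rr with hq
      have hcq : ∀ x, coeff x q = if x ∈ F then 0 else coeff x p := by
        intro x
        rw [hq, coeff_sub, hcoeffr]
        by_cases hx : x ∈ F <;> simp [hx]
      have hqsupp : q.support ⊆ p.support \ {u0} := by
        intro x hx
        have hxne : coeff x q ≠ 0 := mem_support_iff.1 hx
        rw [hcq] at hxne
        by_cases hxF : x ∈ F
        · rw [if_pos hxF] at hxne; exact absurd rfl hxne
        · rw [if_neg hxF] at hxne
          refine Finset.mem_sdiff.2 ⟨mem_support_iff.2 hxne, ?_⟩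
          simp only [Finset.mem_singleton]
          intro hxx
          exact hxF (hxx ▸ hu0F)
      have hqcard : q.support.card ≤ n := by
        have h1 := Finset.card_le_card hqsupp
        have h2 : (p.support \ {u0}).card = p.support.card - 1 := by
          rw [Finset.card_sdiff_of_subset (by simpa using hu0)]
          simp
        have h3 : 1 ≤ p.support.card := Finset.card_pos.2 ⟨u0, hu0⟩
        omega
      have hqfib : ∀ w, ∑ u ∈ q.support.filter (fun u => ΦF hd u = w), coeff u q = 0 := by
        intro w
        have hsub : q.support.filter (fun u => ΦF hd u = w)
            ⊆ p.support.filter (fun u => ΦF hd u = w) :=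
          Finset.filter_subset_filter _ (hqsupp.trans (Finset.sdiff_subset))
        rw [Finset.sum_subset hsub (fun x hx hnx => ?_)]
        · by_cases hw : w = ΦF hd u0
          · apply Finset.sum_eq_zero
            intro u hu
            have huw := (Finset.mem_filter.1 hu).2
            have huF : u ∈ F := Finset.mem_filter.2 ⟨(Finset.mem_filter.1 hu).1, by rw [huw, hw]⟩
            rw [hcq, if_pos huF]
          · have h4 : ∀ u ∈ p.support.filter (fun u => ΦF hd u = w), coeff u q = coeff u p := by
              intro u hu
              have huw := (Finset.mem_filter.1 hu).2
              have huF : u ∉ F := by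
                intro huF
                have h5 : ΦF hd u = ΦF hd u0 := (Finset.mem_filter.1 huF).2
                exact hw ((h5.symm.trans huw).symm)
              rw [hcq, if_neg huF]
            rw [Finset.sum_congr rfl h4]
            exact hfib w
        · have hnsupp : x ∉ q.support := fun h =>
            hnx (Finset.mem_filter.2 ⟨h, (Finset.mem_filter.1 hx).2⟩)
          exact notMem_support_iff.1 hnsupp
      have hqmem := ih q hqcard hqfib
      have hpq : p = q + rr := by rw [hq]; ring
      rw [hpq]
      exact Submodule.add_mem _ hqmem hrmem

noncomputable def XP (m : Multiset V) : MvPolynomial V K := (m.map X).prod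

lemma XP_zero : XP (K := K) (0 : Multiset V) = 1 := by simp [XP]

lemma XP_cons (a : V) (m : Multiset V) : XP (K := K) (a ::ₘ m) = X a * XP (K := K) m := by
  simp [XP]

lemma XP_eq_monomial (m : Multiset V) :
    XP (K := K) m = monomial (Multiset.toFinsupp m) 1 := by
  induction m using Multiset.induction with
  | empty =>
    rw [XP_zero, Multiset.toFinsupp_zero, monomial_zero']
    simp
  | cons a m ih =>
    have h1 : Multiset.toFinsupp (a ::ₘ m) = Finsupp.single a 1 + Multiset.toFinsupp m := by
      have : (a ::ₘ m) = {a} + m := by rw [Multiset.singleton_add]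
      rw [this, map_add, Multiset.toFinsupp_singleton]
    rw [XP_cons, ih, h1, X_eq_monomial', monomial_mul, one_mul]

lemma ΦF_add (u u' : V →₀ ℕ) : ΦF hd (u + u') = ΦF hd u + ΦF hd u' := by
  rw [ΦF, ΦF, ΦF]
  exact Finsupp.sum_add_index' (fun v => zero_smul _ _) (fun v m n => add_smul _ _ _)

lemma ΦF_single (a : V) : ΦF hd (Finsupp.single a 1) = evF hd a := by
  rw [ΦF]
  have h := Finsupp.sum_single_index (a := a) (b := (1:ℕ))
    (h := fun v n => n • evF hd v) (zero_smul _ _)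
  rw [h]
  exact one_smul _ _

lemma map_multiset_finsum {ι' ι κ : Type*} (g : ι → κ) (sf : Finset ι') (f : ι' → Multiset ι) :
    Multiset.map g (∑ i ∈ sf, f i) = ∑ i ∈ sf, (f i).map g := by
  classical
  induction sf using Finset.induction with
  | empty => simp
  | insert _ _ h ih =>
    rw [Finset.sum_insert h, Finset.sum_insert h, Multiset.map_add, ih]

lemma evF_toMultiset (a : V) :
    (Finsupp.toMultiset (evF hd a)).map (fun i : Fin d => i.1 + 1) = cntM a.1 := by
  rw [evF, EV_cntM, map_sum Finsupp.toMultiset _ _, map_multiset_finsum]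
  rw [cntM_eq_sum_univ]
  refine Finset.sum_congr rfl fun k _ => ?_
  have h1 : Finsupp.toMultiset (toVar d hd (a.1 k))
      = {(⟨min (a.1 k - 1) (d-1), by omega⟩ : Fin d)} := by
    show Finsupp.toMultiset (Finsupp.single _ 1) = _
    rw [Finsupp.toMultiset_single, one_nsmul]
  rw [h1]
  have h2 := a.2.mem k
  simp only [Multiset.map_singleton]
  congr 1
  show min (a.1 k - 1) (d-1) + 1 = a.1 k
  omega

lemma content_eq_of_ΦF (m : Multiset V) :
    content m = (Finsupp.toMultiset (ΦF hd (Multiset.toFinsupp m))).map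
      (fun i : Fin d => i.1 + 1) := by
  induction m using Multiset.induction with
  | empty =>
    rw [content_zero, Multiset.toFinsupp_zero]
    have h0 : ΦF hd (0 : V →₀ ℕ) = 0 := Finsupp.sum_zero_index
    rw [h0, map_zero, Multiset.map_zero]
  | cons a m ih =>
    have h1 : Multiset.toFinsupp (a ::ₘ m) = Finsupp.single a 1 + Multiset.toFinsupp m := by
      have : (a ::ₘ m) = {a} + m := by rw [Multiset.singleton_add]
      rw [this, map_add, Multiset.toFinsupp_singleton]
    rw [content_cons, ih, h1, ΦF_add, ΦF_single, map_add, Multiset.map_add,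
      evF_toMultiset]

lemma isSplit_cntM {α β γo γe : Fin τ → ℕ} (h : IsSplit α β γo γe) :
    cntM γo + cntM γe = cntM α + cntM β := by
  obtain ⟨γ, hmono, hms, hpt⟩ := h
  have h1 : cntM γo + cntM γe = cntM γ := by
    rw [ofFn_multiset γo, ofFn_multiset γe, ← Finset.sum_add_distrib, ofFn_multiset γ]
    have h2 : ∀ t ∈ Finset.range τ,
        ({pad γo t} : Multiset ℕ) + {pad γe t}
          = ({pad γ (2*t)} : Multiset ℕ) + {pad γ (2*t+1)} := by
      intro t ht
      have htl : t < τ := by simpa using ht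
      rw [pad_lt γo t htl, pad_lt γe t htl, pad_lt γ (2*t) (by omega), pad_lt γ (2*t+1) (by omega)]
      rw [(hpt ⟨t, htl⟩).1, (hpt ⟨t, htl⟩).2]
    rw [Finset.sum_congr rfl h2, ← sum_range_two_mul τ (fun i => ({pad γ i} : Multiset ℕ))]
  rw [h1]
  show ((List.ofFn γ : List ℕ) : Multiset ℕ) = _
  rw [hms]
  rfl

def GSet : Set (MvPolynomial V K) :=
  { g : MvPolynomial V K |
    ∃ α β γodd γeven : V,
      Nonsorted α.1 β.1 ∧ IsSplit α.1 β.1 γodd.1 γeven.1 ∧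
      g = X α * X β - X γodd * X γeven }

def F1M (m : Multiset V) : ℕ := ((m.map (fun v : V => f1 v.1)).sum)

def F2M (m : Multiset V) : ℕ := ((m.map (fun v : V => f2 v.1)).sum)

lemma F1M_cons (a : V) (m : Multiset V) : F1M (a ::ₘ m) = f1 a.1 + F1M m := by
  simp [F1M]

lemma F2M_cons (a : V) (m : Multiset V) : F2M (a ::ₘ m) = f2 a.1 + F2M m := by
  simp [F2M]

lemma cntM_sum {n : ℕ} (v : Fin n → ℕ) : (cntM v).sum = ∑ k : Fin n, v k := by
  rw [cntM_eq_sum_univ]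
  induction (Finset.univ : Finset (Fin n)) using Finset.induction with
  | empty => simp
  | insert _ _ h ih =>
    rw [Finset.sum_insert h, Finset.sum_insert h, Multiset.sum_add, ih]
    simp

lemma f2_eq (v : V) : f2 v.1 = ((cntM v.1).sum)^2 := by rw [f2, cntM_sum]

lemma content_sum_cons (a : V) (m : Multiset V) :
    (content (a ::ₘ m)).sum = (cntM a.1).sum + (content m).sum := by
  rw [content_cons, Multiset.sum_add]

lemma F2M_bound (m : Multiset V) : F2M m ≤ ((content m).sum)^2 := by
  induction m using Multiset.induction with
  | empty => simp [F2M]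
  | cons a m ih =>
    rw [F2M_cons, content_sum_cons, f2_eq]
    nlinarith [ih, Nat.zero_le ((cntM a.1).sum), Nat.zero_le ((content m).sum)]

lemma F1M_pos (hττ : 0 < τ) (a : V) (m : Multiset V) : 1 ≤ F1M (a ::ₘ m) := by
  rw [F1M_cons]
  have := f1_pos hττ (fun k => (a.2.mem k).1)
  omega

lemma reduct (hττ : 0 < τ) (hsr : ∀ i, s i ≤ r i) (E : Multiset ℕ) :
    ∀ (N : ℕ) (m : Multiset V), ((E.sum)^2 + 1) * F1M m - F2M m ≤ N → content m = E →
    ∃ ms : Multiset V, SortedM ms ∧ content ms = E ∧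
      XP (K := K) m - XP ms ∈ Ideal.span (GSet (K := K)) := by
  intro N
  induction N using Nat.strong_induction_on with
  | _ N ih =>
  intro m hN hcont
  by_cases hS : SortedM m
  · exact ⟨m, hS, hcont, by rw [sub_self]; exact Ideal.zero_mem _⟩
  · simp only [SortedM, not_forall] at hS
    obtain ⟨x, hx, y, hy, hns⟩ := hS
    have hns' : Nonsorted x.1 y.1 := hns
    have hxy : x ≠ y := by
      intro h
      exact hns' (Or.inl (h ▸ pairOrdered_refl x.2.mono))
    have hym : y ∈ m.erase x := (Multiset.mem_erase_of_ne (fun h => hxy h.symm)).2 hy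
    set rest := (m.erase x).erase y with hrest
    have hm : m = x ::ₘ y ::ₘ rest := by
      have h1 : y ::ₘ rest = m.erase x := Multiset.cons_erase hym
      have h2 : x ::ₘ (m.erase x) = m := Multiset.cons_erase hx
      rw [← h2, ← h1]
    set γo : V := ⟨sOdd x.1 y.1, (admissible_split (α := x.1) (β := y.1)
      (hα := x.2) (hβ := y.2) hsr).1⟩ with hγo
    set γe : V := ⟨sEvn x.1 y.1, (admissible_split (α := x.1) (β := y.1)
      (hα := x.2) (hβ := y.2) hsr).2⟩ with hγe
    set m' := γo ::ₘ γe ::ₘ rest with hm'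
    have hcont' : content m' = E := by
      have h3 : content m' = content m := by
        rw [hm', hm, content_cons, content_cons, content_cons, content_cons,
          ← add_assoc, ← add_assoc, split_content]
      rw [h3, hcont]
    have hbin : (X x * X y - X γo * X γe : MvPolynomial V K) ∈ GSet (K := K) :=
      ⟨x, y, γo, γe, hns', isSplit_split x.1 y.1, rfl⟩
    have hXP : XP (K := K) m - XP m' = XP rest * (X x * X y - X γo * X γe) := by
      rw [hm, hm', XP_cons, XP_cons, XP_cons, XP_cons]
      ring
    have hmem : XP (K := K) m - XP m' ∈ Ideal.span (GSet (K := K)) := by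
      rw [hXP]
      exact Ideal.mul_mem_left _ _ (Ideal.subset_span hbin)
    -- measure decrease
    have hF2m : F2M m ≤ (E.sum)^2 := by
      have h4 := F2M_bound m
      rw [hcont] at h4
      exact h4
    have hF2m' : F2M m' ≤ (E.sum)^2 := by
      have h4 := F2M_bound m'
      rw [hcont'] at h4
      exact h4
    have hF1split := split_f1_le x.1 y.1
    have hF1m : F1M m = (f1 x.1 + f1 y.1) + F1M rest := by
      rw [hm, F1M_cons, F1M_cons]
      omega
    have hF1m' : F1M m' = (f1 γo.1 + f1 γe.1) + F1M rest := by
      rw [hm', F1M_cons, F1M_cons]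
      omega
    have e1 : f1 γo.1 = f1 (sOdd x.1 y.1) := rfl
    have e2 : f1 γe.1 = f1 (sEvn x.1 y.1) := rfl
    have e3 : f2 γo.1 = f2 (sOdd x.1 y.1) := rfl
    have e4 : f2 γe.1 = f2 (sEvn x.1 y.1) := rfl
    have h1pos : 1 ≤ F1M m := by
      rw [hm]
      exact F1M_pos hττ _ _
    set B1 := (E.sum)^2 + 1 with hB1
    have hdec : B1 * F1M m' - F2M m' < B1 * F1M m - F2M m := by
      by_cases heq : f1 (sOdd x.1 y.1) + f1 (sEvn x.1 y.1) = f1 x.1 + f1 y.1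
      · have hcols := split_f1_eq_columns x.1 y.1 heq
        have hstrict := split_f2_strict x.1 y.1 hcols hns'
        have hF2eqm : F2M m = (f2 x.1 + f2 y.1) + F2M rest := by
          rw [hm, F2M_cons, F2M_cons]; omega
        have hF2eqm' : F2M m' = (f2 γo.1 + f2 γe.1) + F2M rest := by
          rw [hm', F2M_cons, F2M_cons]; omega
        have hF1eq : F1M m' = F1M m := by omega
        rw [hF1eq]
        have hP : B1 * 1 ≤ B1 * F1M m := Nat.mul_le_mul_left B1 h1pos
        rw [Nat.mul_one] at hP
        omega
      · have hlt : f1 (sOdd x.1 y.1) + f1 (sEvn x.1 y.1) < f1 x.1 + f1 y.1 := by omega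
        have hmul : B1 * (F1M m' + 1) ≤ B1 * F1M m := Nat.mul_le_mul_left B1 (by omega)
        have hexp : B1 * (F1M m' + 1) = B1 * F1M m' + B1 := by ring
        omega
    obtain ⟨ms, hms1, hms2, hms3⟩ := ih (B1 * F1M m' - F2M m')
      (lt_of_lt_of_le hdec hN) m' le_rfl hcont'
    refine ⟨ms, hms1, hms2, ?_⟩
    have h5 := Ideal.add_mem _ hmem hms3
    rwa [sub_add_sub_cancel] at h5

lemma binomial_mem (hττ : 0 < τ) (hsr : ∀ i, s i ≤ r i) (m m' : Multiset V)
    (h : content m = content m') :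
    XP (K := K) m - XP m' ∈ Ideal.span (GSet (K := K)) := by
  obtain ⟨s1, hs1, hc1, hmem1⟩ := reduct (K := K) hττ hsr (content m)
    ((((content m).sum)^2 + 1) * F1M m - F2M m) m le_rfl rfl
  obtain ⟨s2, hs2, hc2, hmem2⟩ := reduct (K := K) hττ hsr (content m)
    ((((content m).sum)^2 + 1) * F1M m' - F2M m') m' le_rfl h.symm
  have hseq : s1 = s2 :=
    sorted_unique hττ (Multiset.card s1) s1 s2 rfl hs1 hs2 (hc1.trans hc2.symm)
  subst hseq
  have h6 := Ideal.sub_mem _ hmem1 hmem2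
  rwa [sub_sub_sub_cancel_right] at h6

end Poly

end SVAux

/-- ker π (the toric ideal of the Segre–Veronese configuration)
is generated, as an ideal of K[y_α : α ∈ V], by the set G of quadratic
binomials y_α y_β − y_{γ_odd} y_{γ_even} taken over all nonsorted pairs
{α, β} of admissible tuples. -/
theorem stmt_7 (hτ : 2 ≤ τ) (hd : 1 ≤ d) (hM : 1 ≤ M)
    (hcb : ∀ i, c i ≤ b i) (hs : ∀ i, 1 ≤ s i) (hsr : ∀ i, s i ≤ r i)
    (hrd : ∀ i, r i ≤ d)
    (K : Type*) [Field K] :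
    RingHom.ker (piSV τ d M b c s r K)
      = Ideal.span
          { g : MvPolynomial {x : Fin τ → ℕ // Admissible τ d M b c s r x} K |
            ∃ α β γodd γeven : {x : Fin τ → ℕ // Admissible τ d M b c s r x},
              Nonsorted α.1 β.1 ∧ IsSplit α.1 β.1 γodd.1 γeven.1 ∧
              g = X α * X β - X γodd * X γeven } := by
  classical
  have hττ : 0 < τ := by omega
  have hGset : { g : MvPolynomial {x : Fin τ → ℕ // Admissible τ d M b c s r x} K |
            ∃ α β γodd γeven : {x : Fin τ → ℕ // Admissible τ d M b c s r x},
              Nonsorted α.1 β.1 ∧ IsSplit α.1 β.1 γodd.1 γeven.1 ∧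
              g = X α * X β - X γodd * X γeven } = SVAux.GSet (K := K) := rfl
  rw [hGset]
  apply le_antisymm
  · -- ker ≤ span
    intro p hp
    have hp0 : piSV τ d M b c s r K p = 0 := by rwa [RingHom.mem_ker] at hp
    have hsp := SVAux.mem_span_binomials (hd := hd) (K := K) p.support.card p le_rfl
      (fun w => SVAux.ker_coeff hd hp0 w)
    have hsub : {q : MvPolynomial {x : Fin τ → ℕ // Admissible τ d M b c s r x} K |
        ∃ u u', SVAux.ΦF hd u = SVAux.ΦF hd u' ∧ q = monomial u 1 - monomial u' 1}
        ⊆ (Ideal.span (SVAux.GSet (τ := τ) (d := d) (M := M) (b := b) (c := c)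
            (s := s) (r := r) (K := K)) : Set _) := by
      rintro q ⟨u, u', hΦ, rfl⟩
      have hXPu : SVAux.XP (K := K) (Finsupp.toMultiset u) = monomial u 1 := by
        rw [SVAux.XP_eq_monomial, Finsupp.toMultiset_toFinsupp]
      have hXPu' : SVAux.XP (K := K) (Finsupp.toMultiset u') = monomial u' 1 := by
        rw [SVAux.XP_eq_monomial, Finsupp.toMultiset_toFinsupp]
      have hcontent : SVAux.content (Finsupp.toMultiset u)
          = SVAux.content (Finsupp.toMultiset u') := by
        rw [SVAux.content_eq_of_ΦF hd, SVAux.content_eq_of_ΦF hd,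
          Finsupp.toMultiset_toFinsupp, Finsupp.toMultiset_toFinsupp, hΦ]
      have := SVAux.binomial_mem (K := K) hττ hsr _ _ hcontent
      rwa [hXPu, hXPu'] at this
    have hle : Submodule.span K {q : MvPolynomial
          {x : Fin τ → ℕ // Admissible τ d M b c s r x} K |
        ∃ u u', SVAux.ΦF hd u = SVAux.ΦF hd u' ∧ q = monomial u 1 - monomial u' 1}
        ≤ Submodule.restrictScalars K (Ideal.span (SVAux.GSet (K := K))) := by
      apply Submodule.span_le.2
      intro q hq
      exact hsub hq
    exact (Submodule.restrictScalars_mem _ _ _).1 (hle hsp)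
  · -- span ≤ ker
    apply Ideal.span_le.2
    rintro g ⟨a, bb, γo, γe, hns, hsplit, rfl⟩
    have hker : piSV τ d M b c s r K (X a * X bb - X γo * X γe) = 0 := by
      rw [map_sub, map_mul, map_mul, SVAux.piSV_X hd, SVAux.piSV_X hd,
        SVAux.piSV_X hd, SVAux.piSV_X hd, monomial_mul, monomial_mul, one_mul]
      have h1 : SVAux.evF hd a + SVAux.evF hd bb
          = SVAux.EV d hd (SVAux.cntM a.1 + SVAux.cntM bb.1) := (SVAux.EV_add d hd _ _).symm
      have h2 : SVAux.evF hd γo + SVAux.evF hd γe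
          = SVAux.EV d hd (SVAux.cntM γo.1 + SVAux.cntM γe.1) := (SVAux.EV_add d hd _ _).symm
      rw [show SVAux.evF hd a + SVAux.evF hd bb = SVAux.evF hd γo + SVAux.evF hd γe by
        rw [h1, h2, SVAux.isSplit_cntM hsplit]]
      rw [sub_self]
    exact RingHom.mem_ker.2 hker
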